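/- Let X ≥ 1 and let s = σ + it with σ = Re s > θ and s ≠ 1. Then |ζ_X(s) − κ·(1 − X^(1−s))/(s−1)| ≤ A·( |s|·(1 − X^(θ−σ))/(σ−θ) + X^(θ−σ) ) ≤ A·min( |s|/(σ−θ), |s|·log X + X^(θ−σ) ). -/

import Mathlib

open scoped BigOperators Real

open MeasureTheory

/-- The multiplicative norm on the Beurling generalized integers `ℕ →₀ ℕ`
generated by the primes `q i`. -/
noncomputable def bNorm (q : ℕ → ℝ) (g : ℕ →₀ ℕ) : ℝ :=
  g.prod fun i k => q i ^ k

/-- The integer counting function `N(x)`. -/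
noncomputable def bN (q : ℕ → ℝ) (x : ℝ) : ℕ :=
  {g : ℕ →₀ ℕ | bNorm q g ≤ x}.ncard

/-- The remainder `R(x) = N(x) - κ(x-1)`. -/
noncomputable def bR (q : ℕ → ℝ) (κ : ℝ) (x : ℝ) : ℝ :=
  (bN q x : ℝ) - κ * (x - 1)

/-- The Beurling zeta function, via the analytic continuation formula
`ζ(s) = κ/(s-1) + s ∫_1^∞ R(x) x^(-s-1) dx`. -/
noncomputable def bZeta (q : ℕ → ℝ) (κ : ℝ) (s : ℂ) : ℂ :=
  (κ : ℂ) / (s - 1) + s * ∫ x in Set.Ioi (1 : ℝ), (bR q κ x : ℂ) * (x : ℂ) ^ (-s - 1)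

/-- The partial sums `ζ_X(s) = ∑_{‖g‖ ≤ X} ‖g‖^{-s}`. -/
noncomputable def bZetaX (q : ℕ → ℝ) (X : ℝ) (s : ℂ) : ℂ :=
  ∑ᶠ g ∈ {g : ℕ →₀ ℕ | bNorm q g ≤ X}, (bNorm q g : ℂ) ^ (-s)

lemma one_le_bNorm (q : ℕ → ℝ) (hq : ∀ i, 1 < q i) (g : ℕ →₀ ℕ) : 1 ≤ bNorm q g := by
  rw [bNorm, Finsupp.prod]
  have := Finset.prod_le_prod (s := g.support) (f := fun _ => (1:ℝ))
    (g := fun i => q i ^ g i) (fun i _ => zero_le_one) (fun i _ => one_le_pow₀ (hq i).le)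
  simpa using this

lemma cpow_identity {a X : ℝ} (ha : 0 < a) (haX : a ≤ X) {s : ℂ} (hs0 : s ≠ 0) :
    (a:ℂ)^(-s) = (X:ℂ)^(-s) + s * ∫ x in Set.Ioc a X, (x:ℂ)^(-s-1) := by
  have h0 : (0:ℝ) ∉ Set.uIcc a X := by
    rw [Set.uIcc_of_le haX]
    rintro ⟨h1, -⟩; linarith
  have hne : -s - 1 ≠ -1 := fun h => hs0 (by linear_combination -h)
  rw [← intervalIntegral.integral_of_le haX, integral_cpow (Or.inr ⟨hne, h0⟩),
    show -s - 1 + 1 = -s by ring]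
  rw [div_neg, mul_neg, ← mul_div_assoc, mul_div_cancel_left₀ _ hs0]
  ring

lemma bN_eq_card (q : ℕ → ℝ) (hfin : ∀ x : ℝ, {g : ℕ →₀ ℕ | bNorm q g ≤ x}.Finite)
    {x X : ℝ} (hxX : x ≤ X) :
    bN q x = ((hfin X).toFinset.filter fun g => bNorm q g ≤ x).card := by
  rw [bN, ← Set.ncard_coe_finset]
  congr 1
  ext g
  simp only [Set.mem_setOf_eq, Finset.coe_filter, Set.Finite.mem_toFinset]
  exact ⟨fun h => ⟨h.trans hxX, h⟩, fun h => h.2⟩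

lemma key_identity (q : ℕ → ℝ) (hq : ∀ i, 1 < q i)
    (hfin : ∀ x : ℝ, {g : ℕ →₀ ℕ | bNorm q g ≤ x}.Finite)
    (κ : ℝ) {X : ℝ} (hX : 1 ≤ X) {s : ℂ} (hs0 : s ≠ 0) (hs1 : s ≠ 1) :
    bZetaX q X s - (κ:ℂ) * (1 - (X:ℂ)^((1:ℂ)-s)) / (s-1)
      = (bR q κ X : ℂ) * (X:ℂ)^(-s)
        + s * ∫ x in Set.Ioc 1 X, (bR q κ x : ℂ) * (x:ℂ)^(-s-1) := by
  set T := (hfin X).toFinset with hT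
  have hX0 : (0:ℝ) < X := lt_of_lt_of_le zero_lt_one hX
  set h : ℝ → ℂ := fun x => (x:ℂ)^(-s-1) with hh
  have hcont : ContinuousOn h (Set.Icc 1 X) := fun x hx =>
    (Complex.continuousAt_ofReal_cpow_const x _ (Or.inr (by intro h0; rw [h0] at hx; linarith [hx.1]))).continuousWithinAt
  have hint : IntegrableOn h (Set.Ioc 1 X) :=
    (hcont.integrableOn_Icc).mono_set Set.Ioc_subset_Icc_self
  have hcont1 : ContinuousOn (fun x : ℝ => (x:ℂ)^(-s)) (Set.Icc 1 X) := fun x hx =>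
    (Complex.continuousAt_ofReal_cpow_const x _ (Or.inr (by intro h0; rw [h0] at hx; linarith [hx.1]))).continuousWithinAt
  have hint1 : IntegrableOn (fun x : ℝ => (x:ℂ)^(-s)) (Set.Ioc 1 X) :=
    (hcont1.integrableOn_Icc).mono_set Set.Ioc_subset_Icc_self
  -- measurability of bN
  have hmono : Monotone fun x : ℝ => ((bN q x : ℝ)) := by
    intro x y hxy
    have : bN q x ≤ bN q y :=
      Set.ncard_le_ncard (fun g hg => le_trans hg hxy) (hfin y)
    exact Nat.cast_le.mpr this
  have hmeasN : Measurable fun x : ℝ => ((bN q x : ℂ)) :=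
    Complex.measurable_ofReal.comp hmono.measurable
  have hmeash : Measurable h :=
    Complex.measurable_ofReal.pow measurable_const
  -- bound for h on Ioc 1 X
  have habs : ∀ x ∈ Set.Ioc (1:ℝ) X, ‖h x‖ ≤ max 1 (X ^ ((-s-1).re)) := by
    intro x hx
    have hx0 : (0:ℝ) < x := lt_trans zero_lt_one hx.1
    rw [hh, Complex.norm_cpow_eq_rpow_re_of_pos hx0]
    rcases le_or_gt 0 ((-s-1).re) with hc | hc
    · exact le_max_of_le_right (Real.rpow_le_rpow hx0.le hx.2 hc)
    · exact le_max_of_le_left (Real.rpow_le_one_of_one_le_of_nonpos hx.1.le hc.le)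
  -- integrability of N * h
  have hNint : IntegrableOn (fun x => (bN q x : ℂ) * h x) (Set.Ioc 1 X) := by
    apply Measure.integrableOn_of_bounded
      (M := (bN q X : ℝ) * max 1 (X ^ ((-s-1).re))) measure_Ioc_lt_top.ne
      ((hmeasN.mul hmeash).aestronglyMeasurable)
    refine ae_restrict_of_forall_mem measurableSet_Ioc fun x hx => ?_
    rw [Pi.mul_apply, norm_mul, Complex.norm_natCast]
    have hNle : (bN q x : ℝ) ≤ (bN q X : ℝ) := hmono hx.2
    exact mul_le_mul hNle (habs x hx) (norm_nonneg _) (Nat.cast_nonneg _)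
  -- integrability of R * h
  have hRint : IntegrableOn (fun x => (bR q κ x : ℂ) * h x) (Set.Ioc 1 X) := by
    have heq : (fun x => (bR q κ x : ℂ) * h x)
        = fun x => (bN q x : ℂ) * h x - (κ:ℂ) * (((x:ℝ):ℂ) - 1) * h x := by
      funext x
      rw [bR]
      push_cast
      ring
    rw [heq]
    apply hNint.sub
    have hcont2 : ContinuousOn (fun x : ℝ => (κ:ℂ) * (((x:ℝ):ℂ) - 1) * h x) (Set.Icc 1 X) := by
      apply ContinuousOn.mul _ hcont
      exact (continuous_const.mul ((Complex.continuous_ofReal).sub continuous_const)).continuousOn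
    exact (hcont2.integrableOn_Icc).mono_set Set.Ioc_subset_Icc_self
  -- step 1: bZetaX as finset sum
  have h1 : bZetaX q X s = ∑ g ∈ T, (bNorm q g : ℂ)^(-s) := by
    rw [bZetaX, ← Set.Finite.coe_toFinset (hfin X), finsum_mem_coe_finset]
  -- step 2: per-element identity
  have h2 : ∀ g ∈ T, (bNorm q g : ℂ)^(-s)
      = (X:ℂ)^(-s) + s * ∫ x in Set.Ioc (bNorm q g) X, h x := by
    intro g hg
    have hg' : bNorm q g ≤ X := (Set.Finite.mem_toFinset (hfin X)).mp hg
    exact cpow_identity (lt_of_lt_of_le zero_lt_one (one_le_bNorm q hq g)) hg' hs0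
  -- step 3: swap sum & integral
  have h3 : ∑ g ∈ T, ∫ x in Set.Ioc (bNorm q g) X, h x
      = ∫ x in Set.Ioc (1:ℝ) X, (bN q x : ℂ) * h x := by
    have hsub : ∀ g ∈ T, Set.Ioc (bNorm q g) X ⊆ Set.Ioc (1:ℝ) X := fun g hg x hx =>
      ⟨lt_of_le_of_lt (one_le_bNorm q hq g) hx.1, hx.2⟩
    have e1 : ∀ g ∈ T, ∫ x in Set.Ioc (bNorm q g) X, h x
        = ∫ x in Set.Ioc (1:ℝ) X, (Set.Ioc (bNorm q g) X).indicator h x := by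
      intro g hg
      rw [setIntegral_indicator measurableSet_Ioc,
        Set.inter_eq_self_of_subset_right (hsub g hg)]
    rw [Finset.sum_congr rfl e1, ← integral_finset_sum]
    · refine setIntegral_congr_ae measurableSet_Ioc ?_
      have hE : ∀ᵐ x : ℝ, x ∉ ((T.image fun g => bNorm q g : Finset ℝ) : Set ℝ) := by
        have hm0 : volume ((T.image fun g => bNorm q g : Finset ℝ) : Set ℝ) = 0 :=
          (T.image fun g => bNorm q g).finite_toSet.measure_zero volume
        rw [ae_iff]
        simpa only [not_not, Set.setOf_mem_eq] using hm0
      filter_upwards [hE] with x hxE hx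
      have key : ∀ g ∈ T, (Set.Ioc (bNorm q g) X).indicator h x
          = if bNorm q g ≤ x then h x else 0 := by
        intro g hg
        rw [Set.indicator_apply]
        congr 1
        simp only [Set.mem_Ioc, eq_iff_iff]
        constructor
        · exact fun hm => hm.1.le
        · intro hm
          refine ⟨lt_of_le_of_ne hm ?_, hx.2⟩
          intro hcontra
          exact hxE (by simpa using Finset.mem_image.mpr ⟨g, hg, hcontra⟩)
      rw [Finset.sum_congr rfl key, ← Finset.sum_filter, Finset.sum_const, nsmul_eq_mul,
        bN_eq_card q hfin hx.2]
    · exact fun g hg => hint.indicator measurableSet_Ioc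
  -- step 4: summation formula
  have hZ : bZetaX q X s = (bN q X : ℂ) * (X:ℂ)^(-s)
      + s * ∫ x in Set.Ioc (1:ℝ) X, (bN q x : ℂ) * h x := by
    have hcard : bN q X = T.card := by
      rw [bN_eq_card q hfin (le_refl X)]
      congr 1
      exact Finset.filter_true_of_mem fun g hg => (Set.Finite.mem_toFinset (hfin X)).mp hg
    rw [h1, Finset.sum_congr rfl h2, Finset.sum_add_distrib, Finset.sum_const, nsmul_eq_mul,
      ← Finset.mul_sum, h3, hcard]
  -- step 5: split the integral
  have h0 : (0:ℝ) ∉ Set.uIcc 1 X := by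
    rw [Set.uIcc_of_le hX]
    rintro ⟨h1', -⟩; linarith
  have hI1 : ∫ x in Set.Ioc (1:ℝ) X, (x:ℂ)^(-s)
      = ((X:ℂ)^((1:ℂ)-s) - 1) / (1-s) := by
    have hne : -s ≠ -1 := fun hcon => hs1 (by linear_combination -hcon)
    rw [← intervalIntegral.integral_of_le hX, integral_cpow (Or.inr ⟨hne, h0⟩),
      show -s + 1 = 1-s by ring, Complex.ofReal_one, Complex.one_cpow]
  have hI2 : ∫ x in Set.Ioc (1:ℝ) X, h x = ((X:ℂ)^(-s) - 1) / (-s) := by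
    have hne : -s - 1 ≠ -1 := fun hcon => hs0 (by linear_combination -hcon)
    rw [hh, ← intervalIntegral.integral_of_le hX, integral_cpow (Or.inr ⟨hne, h0⟩),
      show -s - 1 + 1 = -s by ring, Complex.ofReal_one, Complex.one_cpow]
  have hNsplit : ∫ x in Set.Ioc (1:ℝ) X, (bN q x : ℂ) * h x
      = (κ:ℂ) * (((X:ℂ)^((1:ℂ)-s) - 1) / (1-s) - ((X:ℂ)^(-s) - 1) / (-s))
        + ∫ x in Set.Ioc (1:ℝ) X, (bR q κ x : ℂ) * h x := by
    rw [← hI1, ← hI2]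
    have heq : Set.EqOn (fun x => (bN q x : ℂ) * h x)
        (fun x => (κ:ℂ) * ((x:ℂ)^(-s) - h x) + (bR q κ x : ℂ) * h x) (Set.Ioc 1 X) := by
      intro x hx
      have hx0 : ((x:ℝ):ℂ) ≠ 0 := by
        simp only [ne_eq, Complex.ofReal_eq_zero]
        nlinarith [hx.1]
      have hxs := Complex.cpow_add (-s-1) 1 hx0
      rw [show -s - 1 + 1 = -s by ring, Complex.cpow_one] at hxs
      simp only [hh, bR]
      rw [hxs]
      push_cast
      ring
    have hκint : IntegrableOn (fun x : ℝ => (κ:ℂ) * ((x:ℂ)^(-s) - h x)) (Set.Ioc 1 X) :=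
      (hint1.sub hint).const_mul _
    rw [setIntegral_congr_fun measurableSet_Ioc heq,
      integral_add hκint hRint, integral_const_mul, integral_sub hint1 hint]
  -- final algebra
  rw [hZ, hNsplit]
  have hbNX : (bN q X : ℂ) = (κ:ℂ) * ((X:ℂ) - 1) + (bR q κ X : ℂ) := by
    rw [bR]; push_cast; ring
  have hXv : (X:ℂ)^((1:ℂ)-s) = (X:ℂ) * (X:ℂ)^(-s) := by
    rw [show (1:ℂ)-s = 1 + (-s) by ring,
      Complex.cpow_add _ _ (by exact_mod_cast hX0.ne' : (X:ℂ) ≠ 0), Complex.cpow_one]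
  rw [hbNX, hXv]
  have h1s : (1:ℂ) - s ≠ 0 := fun hcon => hs1 (by linear_combination -hcon)
  have hsm1 : s - (1:ℂ) ≠ 0 := sub_ne_zero.mpr hs1
  set u : ℂ := (X:ℂ)^(-s) with hu
  set I : ℂ := ∫ x in Set.Ioc (1:ℝ) X, (bR q κ x : ℂ) * h x with hI
  field_simp [hs0, h1s, hsm1]
  ring


theorem statement_5
    (q : ℕ → ℝ) (hq : ∀ i, 1 < q i)
    (hfin : ∀ x : ℝ, {g : ℕ →₀ ℕ | bNorm q g ≤ x}.Finite)
    (κ A θ : ℝ) (hκ : 0 < κ) (hA : 0 < A) (hθ0 : 0 < θ) (hθ1 : θ < 1)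
    (hAxiomA : ∀ x : ℝ, 1 ≤ x → |bR q κ x| ≤ A * x ^ θ)
    (X : ℝ) (hX : 1 ≤ X) (s : ℂ) (hs : θ < s.re) (hs1 : s ≠ 1) :
    ‖bZetaX q X s - (κ : ℂ) * (1 - (X : ℂ) ^ ((1 : ℂ) - s)) / (s - 1)‖ ≤
      A * (‖s‖ * (1 - X ^ (θ - s.re)) / (s.re - θ) + X ^ (θ - s.re)) ∧
    A * (‖s‖ * (1 - X ^ (θ - s.re)) / (s.re - θ) + X ^ (θ - s.re)) ≤
      A * min (‖s‖ / (s.re - θ)) (‖s‖ * Real.log X + X ^ (θ - s.re)) := by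
  have hs0 : s ≠ 0 := by
    intro h
    rw [h] at hs
    simp at hs
    linarith
  have hσθ : 0 < s.re - θ := by linarith
  have hX0 : (0:ℝ) < X := lt_of_lt_of_le zero_lt_one hX
  constructor
  · rw [key_identity q hq hfin κ hX hs0 hs1]
    have hterm1 : ‖(bR q κ X : ℂ) * (X:ℂ)^(-s)‖ ≤ A * X ^ (θ - s.re) := by
      rw [norm_mul, Complex.norm_real, Real.norm_eq_abs, Complex.norm_cpow_eq_rpow_re_of_pos hX0, Complex.neg_re]
      calc |bR q κ X| * X ^ (-s.re) ≤ (A * X ^ θ) * X ^ (-s.re) :=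
            mul_le_mul_of_nonneg_right (hAxiomA X hX) (Real.rpow_nonneg hX0.le _)
        _ = A * X ^ (θ - s.re) := by
            rw [mul_assoc, ← Real.rpow_add hX0, ← sub_eq_add_neg]
    have hIR : ‖∫ x in Set.Ioc (1:ℝ) X, (bR q κ x : ℂ) * (x:ℂ)^(-s-1)‖
        ≤ A * ((1 - X ^ (θ - s.re)) / (s.re - θ)) := by
      have hgcont : ContinuousOn (fun x : ℝ => A * x ^ (θ - s.re - 1)) (Set.Icc 1 X) := by
        apply ContinuousOn.mul continuousOn_const
        intro x hx
        exact (Real.continuousAt_rpow_const x _ (Or.inl (by linarith [hx.1]))).continuousWithinAt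
      have hgint : IntegrableOn (fun x : ℝ => A * x ^ (θ - s.re - 1)) (Set.Ioc 1 X) :=
        hgcont.integrableOn_Icc.mono_set Set.Ioc_subset_Icc_self
      have hb : ∀ x ∈ Set.Ioc (1:ℝ) X,
          ‖(bR q κ x : ℂ) * (x:ℂ)^(-s-1)‖ ≤ A * x ^ (θ - s.re - 1) := by
        intro x hx
        have hx0 : (0:ℝ) < x := lt_trans zero_lt_one hx.1
        rw [norm_mul, Complex.norm_real, Real.norm_eq_abs,
          Complex.norm_cpow_eq_rpow_re_of_pos hx0]
        have hre : (-s-1).re = -s.re - 1 := by simp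
        rw [hre]
        calc |bR q κ x| * x ^ (-s.re - 1) ≤ (A * x ^ θ) * x ^ (-s.re - 1) :=
              mul_le_mul_of_nonneg_right (hAxiomA x hx.1.le) (Real.rpow_nonneg hx0.le _)
          _ = A * x ^ (θ - s.re - 1) := by
              rw [mul_assoc, ← Real.rpow_add hx0]
              ring_nf
      have h0 : (0:ℝ) ∉ Set.uIcc 1 X := by
        rw [Set.uIcc_of_le hX]
        rintro ⟨h1', -⟩; linarith
      calc ‖∫ x in Set.Ioc (1:ℝ) X, (bR q κ x : ℂ) * (x:ℂ)^(-s-1)‖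
          ≤ ∫ x in Set.Ioc (1:ℝ) X, A * x ^ (θ - s.re - 1) :=
            norm_integral_le_of_norm_le hgint (ae_restrict_of_forall_mem measurableSet_Ioc hb)
        _ = A * ((1 - X ^ (θ - s.re)) / (s.re - θ)) := by
            have hne : θ - s.re - 1 ≠ -1 := by
              intro hc
              have : θ - s.re = 0 := by linarith [sub_eq_iff_eq_add.mp hc]
              linarith [hσθ]
            rw [integral_const_mul, ← intervalIntegral.integral_of_le hX,
              integral_rpow (Or.inr ⟨hne, h0⟩), show θ - s.re - 1 + 1 = θ - s.re by ring,
              Real.one_rpow]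
            congr 1
            rw [div_eq_div_iff (by linarith) (by linarith : s.re - θ ≠ 0)]
            ring
    calc ‖(bR q κ X : ℂ) * (X:ℂ)^(-s)
            + s * ∫ x in Set.Ioc (1:ℝ) X, (bR q κ x : ℂ) * (x:ℂ)^(-s-1)‖
        ≤ ‖(bR q κ X : ℂ) * (X:ℂ)^(-s)‖
            + ‖s‖ * ‖∫ x in Set.Ioc (1:ℝ) X, (bR q κ x : ℂ) * (x:ℂ)^(-s-1)‖ := by
          refine le_trans (norm_add_le _ _) ?_
          rw [norm_mul s]
      _ ≤ A * X ^ (θ - s.re)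
            + ‖s‖ * (A * ((1 - X ^ (θ - s.re)) / (s.re - θ))) := by
          refine add_le_add hterm1 (mul_le_mul_of_nonneg_left ?_ (norm_nonneg s))
          exact hIR
      _ = A * (‖s‖ * (1 - X ^ (θ - s.re)) / (s.re - θ) + X ^ (θ - s.re)) := by
          ring
  · refine mul_le_mul_of_nonneg_left (le_min ?_ ?_) hA.le
    · have he0 : 0 < X ^ (θ - s.re) := Real.rpow_pos_of_pos hX0 _
      have habs : s.re - θ ≤ ‖s‖ := le_trans (by linarith) (Complex.re_le_norm s)
      have h1 : X ^ (θ - s.re) ≤ ‖s‖ * X ^ (θ - s.re) / (s.re - θ) := by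
        rw [le_div_iff₀ hσθ]
        nlinarith
      calc ‖s‖ * (1 - X ^ (θ - s.re)) / (s.re - θ) + X ^ (θ - s.re)
          ≤ ‖s‖ * (1 - X ^ (θ - s.re)) / (s.re - θ)
            + ‖s‖ * X ^ (θ - s.re) / (s.re - θ) := add_le_add_right h1 _
        _ = ‖s‖ / (s.re - θ) := by
            field_simp
            ring
    · refine add_le_add_left ?_ _
      have hlog : 1 - X ^ (θ - s.re) ≤ (s.re - θ) * Real.log X := by
        have hexp := Real.add_one_le_exp (Real.log X * (θ - s.re))
        have hee : X ^ (θ - s.re) = Real.exp (Real.log X * (θ - s.re)) := by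
          rw [Real.rpow_def_of_pos hX0]
        rw [← hee] at hexp
        nlinarith
      rw [div_le_iff₀ hσθ]
      calc ‖s‖ * (1 - X ^ (θ - s.re))
          ≤ ‖s‖ * ((s.re - θ) * Real.log X) :=
            mul_le_mul_of_nonneg_left hlog (norm_nonneg s)
        _ = ‖s‖ * Real.log X * (s.re - θ) := by ring
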